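/- Fix n ≥ 4. Let F' be the free abelian group on the set {A ⊆ ZMod n : 0 ∈ A, 2 ≤ |A| ≤ n−2} with generators δ_A, and for a subset X ⊆ ZMod n with 2 ≤ |X| ≤ n−2 write X* for the unique member of {X, X^c} containing 0. Let R' ≤ F' be the subgroup generated by the elements r_{m,p} = δ_{I*} − Σ_{A ∈ L} δ_{A*} + Σ_{A ∈ K} δ_{A*}, for each m ∈ ZMod n and 1 ≤ p ≤ n−3, where I = {m, m+1, …, m+p}, L = {A ⊆ ZMod n : 2 ≤ |A| ≤ n−2, m−1 ∈ A, m+p ∈ A, m ∉ A, m+p+1 ∉ A} and K = {A ⊆ ZMod n : 2 ≤ |A| ≤ n−2, m−1 ∈ A, m+p+1 ∈ A, m ∉ A, m+p ∉ A, A ≠ I^c}. Then the natural group homomorphism F'/R' → G(n) sending the class of δ_A to the class of δ_A in the Keel presentation group G(n) is an isomorphism. -/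

import Mathlib

open scoped Classical

/-- A subset `A ⊆ ZMod n` is a cyclic interval if `A = {a, a+1, …, a+(k−1)}`
for some `a ∈ ZMod n` and `k ≥ 1` (addition in `ZMod n`). -/
def IsCyclicInterval {n : ℕ} (A : Finset (ZMod n)) : Prop :=
  ∃ (a : ZMod n) (k : ℕ), 1 ≤ k ∧ A = (Finset.range k).image (fun i : ℕ => a + (i : ZMod n))

/-- The index set `Dn = {A ⊆ ZMod n : 2 ≤ |A| ≤ n−2}` of boundary divisors. -/
abbrev DivIdx (n : ℕ) := {A : Finset (ZMod n) // 2 ≤ A.card ∧ A.card ≤ n - 2}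

/-- The complement, as an element of `Dn`. -/
noncomputable def complIdx (n : ℕ) (hn : 4 ≤ n) (A : DivIdx n) : DivIdx n :=
  haveI : NeZero n := ⟨by omega⟩
  ⟨(A : Finset (ZMod n))ᶜ, by
    have h1 := A.prop.1
    have h2 := A.prop.2
    have hc : (A : Finset (ZMod n))ᶜ.card = n - (A : Finset (ZMod n)).card := by
      rw [Finset.card_compl, ZMod.card]
    omega⟩

/-- The Keel relation element associated to four (pairwise distinct) points
`i, j, k, l`: `(Σ_{A : i,j∈A, k,l∉A} δ_A) − (Σ_{A : i,k∈A, j,l∉A} δ_A)`. -/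
noncomputable def keelElt (n : ℕ) (hn : 4 ≤ n) (i j k l : ZMod n) :
    FreeAbelianGroup (DivIdx n) :=
  haveI : NeZero n := ⟨by omega⟩
  (∑ A ∈ Finset.univ.filter (fun A : DivIdx n =>
      i ∈ A.val ∧ j ∈ A.val ∧ k ∉ A.val ∧ l ∉ A.val), FreeAbelianGroup.of A)
  - (∑ A ∈ Finset.univ.filter (fun A : DivIdx n =>
      i ∈ A.val ∧ k ∈ A.val ∧ j ∉ A.val ∧ l ∉ A.val), FreeAbelianGroup.of A)

/-- The subgroup `R` of relations of the Keel presentation: generated by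
`δ_A − δ_{A^c}` for `A ∈ Dn`, together with the Keel relations for every four
pairwise distinct points `i, j, k, l ∈ ZMod n`. -/
noncomputable def KeelRelations (n : ℕ) (hn : 4 ≤ n) :
    AddSubgroup (FreeAbelianGroup (DivIdx n)) :=
  AddSubgroup.closure
    ({x | ∃ A : DivIdx n, x = FreeAbelianGroup.of A - FreeAbelianGroup.of (complIdx n hn A)} ∪
     {x | ∃ i j k l : ZMod n, i ≠ j ∧ i ≠ k ∧ i ≠ l ∧ j ≠ k ∧ j ≠ l ∧ k ≠ l ∧
        x = keelElt n hn i j k l})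

/-- The Keel presentation group `G(n) = F/R` of `Pic(M̄_{0,n})`. -/
abbrev KeelGroup (n : ℕ) (hn : 4 ≤ n) :=
  FreeAbelianGroup (DivIdx n) ⧸ KeelRelations n hn


/-- The index set of generators of `F'`: subsets `A ⊆ ZMod n` with `0 ∈ A` and
`2 ≤ |A| ≤ n−2`. -/
abbrev D0Idx (n : ℕ) := {A : Finset (ZMod n) //
  (0 : ZMod n) ∈ A ∧ 2 ≤ A.card ∧ A.card ≤ n - 2}

/-- For `X ⊆ ZMod n` with `2 ≤ |X| ≤ n−2`, `X*` is the unique member of `{X, Xᶜ}`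
containing `0`, as an element of `D0Idx n`. -/
noncomputable def starIdx (n : ℕ) (hn : 4 ≤ n) (X : Finset (ZMod n))
    (h : 2 ≤ X.card ∧ X.card ≤ n - 2) : D0Idx n :=
  haveI : NeZero n := ⟨by omega⟩
  if h0 : (0 : ZMod n) ∈ X then ⟨X, h0, h⟩
  else
    ⟨Xᶜ, by
      have hc : Xᶜ.card = n - X.card := by rw [Finset.card_compl, ZMod.card]
      exact ⟨Finset.mem_compl.mpr h0, by omega, by omega⟩⟩

/-- The cyclic interval `{m, m+1, …, m+p}` has `p+1` elements when `p ≤ n−3`. -/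
lemma interval_card (n : ℕ) (hn : 4 ≤ n) (m : ZMod n) (p : ℕ) (hp2 : p ≤ n - 3) :
    ((Finset.range (p + 1)).image (fun i : ℕ => m + (i : ZMod n))).card = p + 1 := by
  rw [Finset.card_image_of_injOn, Finset.card_range]
  intro i hi j hj hij
  simp only [Finset.coe_range, Set.mem_Iio] at hi hj
  have hc : (i : ZMod n) = (j : ZMod n) := add_left_cancel hij
  have hmod : i % n = j % n := (ZMod.natCast_eq_natCast_iff i j n).mp hc
  rw [Nat.mod_eq_of_lt (by omega), Nat.mod_eq_of_lt (by omega)] at hmod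
  exact hmod

/-- The relation element `r_{m,p} = δ_{I*} − Σ_{A ∈ L} δ_{A*} + Σ_{A ∈ K} δ_{A*}`
in `F'`, for `I = {m, …, m+p}`,
`L = {A : 2 ≤ |A| ≤ n−2, m−1 ∈ A, m+p ∈ A, m ∉ A, m+p+1 ∉ A}` and
`K = {A : 2 ≤ |A| ≤ n−2, m−1 ∈ A, m+p+1 ∈ A, m ∉ A, m+p ∉ A, A ≠ Iᶜ}`. -/
noncomputable def relElt (n : ℕ) (hn : 4 ≤ n) (m : ZMod n) (p : ℕ)
    (hp1 : 1 ≤ p) (hp2 : p ≤ n - 3) : FreeAbelianGroup (D0Idx n) :=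
  haveI : NeZero n := ⟨by omega⟩
  FreeAbelianGroup.of (starIdx n hn
      ((Finset.range (p + 1)).image (fun i : ℕ => m + (i : ZMod n)))
      (by rw [interval_card n hn m p hp2]; omega))
  - (∑ A ∈ Finset.univ.filter (fun A : DivIdx n =>
        m - 1 ∈ A.val ∧ m + (p : ZMod n) ∈ A.val ∧ m ∉ A.val ∧
          m + (p : ZMod n) + 1 ∉ A.val),
      FreeAbelianGroup.of (starIdx n hn A.val A.prop))
  + (∑ A ∈ Finset.univ.filter (fun A : DivIdx n =>
        m - 1 ∈ A.val ∧ m + (p : ZMod n) + 1 ∈ A.val ∧ m ∉ A.val ∧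
          m + (p : ZMod n) ∉ A.val ∧
          A.val ≠ ((Finset.range (p + 1)).image (fun i : ℕ => m + (i : ZMod n)))ᶜ),
      FreeAbelianGroup.of (starIdx n hn A.val A.prop))

/-- The subgroup `R' ≤ F'` generated by the relation elements `r_{m,p}`. -/
noncomputable def NewRelations (n : ℕ) (hn : 4 ≤ n) :
    AddSubgroup (FreeAbelianGroup (D0Idx n)) :=
  AddSubgroup.closure
    {x | ∃ (m : ZMod n) (p : ℕ) (hp1 : 1 ≤ p) (hp2 : p ≤ n - 3),
      x = relElt n hn m p hp1 hp2}

/-! ### Auxiliary development -/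

namespace NewPresAux

open FreeAbelianGroup

variable {n : ℕ}

/-- The ring of integer-valued functions on `D0Idx n`. -/
abbrev Amod (n : ℕ) := D0Idx n → ℤ

/-- Characteristic function of membership of `x`. -/
noncomputable def chi (n : ℕ) (x : ZMod n) : Amod n := fun C => if x ∈ C.val then 1 else 0

/-- The "edge" function `e_x = χ_{x+1} - χ_x`. -/
noncomputable def ee (n : ℕ) (x : ZMod n) : Amod n := chi n (x + 1) - chi n x

/-- The coefficient map from the free abelian group to functions. -/
noncomputable def coeA (n : ℕ) : FreeAbelianGroup (D0Idx n) →+ Amod n :=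
  FreeAbelianGroup.lift (fun B => fun C => if C = B then (1 : ℤ) else 0)

lemma coeA_of (B C : D0Idx n) :
    coeA n (FreeAbelianGroup.of B) C = if C = B then 1 else 0 := by
  rw [coeA, FreeAbelianGroup.lift_apply_of]

lemma coeA_injective : Function.Injective (coeA n) := by
  intro u v h
  have key : ∀ (w : FreeAbelianGroup (D0Idx n)) (C : D0Idx n),
      (FreeAbelianGroup.toFinsupp w) C = coeA n w C := by
    intro w C
    have hh : ((Finsupp.applyAddHom C).comp (FreeAbelianGroup.toFinsupp (X := D0Idx n))) =
        (Pi.evalAddMonoidHom (fun _ : D0Idx n => ℤ) C).comp (coeA n) := by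
      apply FreeAbelianGroup.lift_ext
      intro x
      simp [FreeAbelianGroup.toFinsupp_of, coeA_of, Finsupp.single_apply, eq_comm]
    exact DFunLike.congr_fun hh w
  have h2 : FreeAbelianGroup.toFinsupp u = FreeAbelianGroup.toFinsupp v := by
    ext C; rw [key, key, h]
  have h3 := congrArg Finsupp.toFreeAbelianGroup h2
  rwa [Finsupp.toFreeAbelianGroup_toFinsupp, Finsupp.toFreeAbelianGroup_toFinsupp] at h3

/-- `X*` equals `C` iff `X` is `C` or its complement. -/
lemma starIdx_eq_iff [NeZero n] (hn : 4 ≤ n) (X : Finset (ZMod n))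
    (h : 2 ≤ X.card ∧ X.card ≤ n - 2) (C : D0Idx n) :
    starIdx n hn X h = C ↔ X = C.val ∨ X = C.valᶜ := by
  have h0C := C.prop.1
  rw [starIdx]
  split_ifs with h0
  · constructor
    · rintro rfl; exact Or.inl rfl
    · rintro (rfl | rfl)
      · rfl
      · exact absurd h0 (by simp [h0C])
  · constructor
    · rintro rfl; right; simp
    · rintro (rfl | rfl)
      · exact absurd h0C h0
      · exact Subtype.ext (by simp)

noncomputable def cIdx (C : D0Idx n) : DivIdx n := ⟨C.val, C.prop.2⟩

noncomputable def ccIdx (hn : 4 ≤ n) (C : D0Idx n) : DivIdx n := complIdx n hn (cIdx C)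

@[simp] lemma cIdx_val (C : D0Idx n) : (cIdx C).val = C.val := rfl

@[simp] lemma ccIdx_val [NeZero n] (hn : 4 ≤ n) (C : D0Idx n) : (ccIdx hn C).val = C.valᶜ := rfl

lemma compl_ne_self [NeZero n] (C : D0Idx n) : C.val ≠ C.valᶜ := by
  intro hE
  have h0 : (0 : ZMod n) ∈ C.val := C.prop.1
  have h0' : (0 : ZMod n) ∈ C.valᶜ := hE ▸ h0
  exact (Finset.mem_compl.mp h0') C.prop.1

lemma coeA_sum_star [NeZero n] (hn : 4 ≤ n) (P : DivIdx n → Prop) [DecidablePred P] (C : D0Idx n) :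
    coeA n (∑ A ∈ Finset.univ.filter (fun A : DivIdx n => P A),
      FreeAbelianGroup.of (starIdx n hn A.val A.prop)) C
    = (if P (cIdx C) then 1 else 0) + (if P (ccIdx hn C) then 1 else 0) := by
  rw [map_sum, Finset.sum_apply]
  have hterm : ∀ A : DivIdx n,
      coeA n (FreeAbelianGroup.of (starIdx n hn A.val A.prop)) C
      = (if A = cIdx C then (1 : ℤ) else 0) + (if A = ccIdx hn C then 1 else 0) := by
    intro A
    have hiff : (C = starIdx n hn A.val A.prop) ↔ (A = cIdx C ∨ A = ccIdx hn C) := by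
      rw [eq_comm, starIdx_eq_iff hn]
      constructor
      · rintro (h1 | h1)
        · exact Or.inl (Subtype.ext h1)
        · exact Or.inr (Subtype.ext h1)
      · rintro (rfl | rfl)
        · exact Or.inl rfl
        · exact Or.inr rfl
    rw [coeA_of, if_congr hiff rfl rfl]
    have hcc : cIdx C ≠ ccIdx hn C := fun h3 => compl_ne_self C (congrArg Subtype.val h3)
    by_cases h1 : A = cIdx C <;> by_cases h2 : A = ccIdx hn C
    · exact absurd (h1 ▸ h2) hcc
    all_goals simp [h1, h2, hcc, Ne.symm hcc]
  rw [Finset.sum_congr rfl (fun A _ => hterm A), Finset.sum_add_distrib]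
  rw [Finset.sum_ite_eq' (Finset.univ.filter (fun A : DivIdx n => P A)) (cIdx C)
      (fun _ => (1 : ℤ)),
    Finset.sum_ite_eq' (Finset.univ.filter (fun A : DivIdx n => P A)) (ccIdx hn C)
      (fun _ => (1 : ℤ))]
  simp [Finset.mem_filter]

lemma mem_interval (m : ZMod n) (p i : ℕ) (hi : i ≤ p) :
    m + (i : ZMod n) ∈ (Finset.range (p + 1)).image (fun i : ℕ => m + (i : ZMod n)) :=
  Finset.mem_image.mpr ⟨i, Finset.mem_range.mpr (by omega), rfl⟩

lemma not_mem_interval (hn : 4 ≤ n) (m : ZMod n) (p : ℕ) (hp2 : p ≤ n - 3) (c : ℕ)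
    (hc1 : p + 1 ≤ c) (hc2 : c ≤ n - 1) :
    m + (c : ZMod n) ∉ (Finset.range (p + 1)).image (fun i : ℕ => m + (i : ZMod n)) := by
  intro hmem
  obtain ⟨i, hi, hEq⟩ := Finset.mem_image.mp hmem
  rw [Finset.mem_range] at hi
  have hic : (i : ZMod n) = (c : ZMod n) := add_left_cancel hEq
  have hmod := (ZMod.natCast_eq_natCast_iff i c n).mp hic
  rw [Nat.ModEq, Nat.mod_eq_of_lt (by omega), Nat.mod_eq_of_lt (by omega)] at hmod
  omega

lemma interval_facts (hn : 4 ≤ n) (m : ZMod n) (p : ℕ) (hp1 : 1 ≤ p) (hp2 : p ≤ n - 3) :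
    m ∈ (Finset.range (p + 1)).image (fun i : ℕ => m + (i : ZMod n)) ∧
    m + (p : ZMod n) ∈ (Finset.range (p + 1)).image (fun i : ℕ => m + (i : ZMod n)) ∧
    m - 1 ∉ (Finset.range (p + 1)).image (fun i : ℕ => m + (i : ZMod n)) ∧
    m + (p : ZMod n) + 1 ∉ (Finset.range (p + 1)).image (fun i : ℕ => m + (i : ZMod n)) := by
  refine ⟨by simpa using mem_interval m p 0 (by omega), mem_interval m p p le_rfl, ?_, ?_⟩
  · have h1 := not_mem_interval hn m p hp2 (n - 1) (by omega) (by omega)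
    have h2 : m + ((n - 1 : ℕ) : ZMod n) = m - 1 := by
      rw [Nat.cast_sub (by omega : 1 ≤ n), ZMod.natCast_self, Nat.cast_one, zero_sub,
        sub_eq_add_neg]
    rwa [h2] at h1
  · have h1 := not_mem_interval hn m p hp2 (p + 1) le_rfl (by omega)
    have h2 : m + ((p + 1 : ℕ) : ZMod n) = m + (p : ZMod n) + 1 := by
      push_cast; ring
    rwa [h2] at h1

lemma interval_ne_compl [NeZero n] (hn : 4 ≤ n) (m : ZMod n) (p : ℕ) (hp1 : 1 ≤ p) (hp2 : p ≤ n - 3) :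
    (Finset.range (p + 1)).image (fun i : ℕ => m + (i : ZMod n)) ≠
      ((Finset.range (p + 1)).image (fun i : ℕ => m + (i : ZMod n)))ᶜ := by
  intro hE
  obtain ⟨hm, _, _, _⟩ := interval_facts hn m p hp1 hp2
  have h2 := hE ▸ hm
  exact (Finset.mem_compl.mp h2) hm

lemma coeA_relElt (hn : 4 ≤ n) (m : ZMod n) (p : ℕ) (hp1 : 1 ≤ p) (hp2 : p ≤ n - 3) :
    coeA n (relElt n hn m p hp1 hp2) = -(ee n (m - 1) * ee n (m + (p : ZMod n))) := by
  haveI : NeZero n := ⟨by omega⟩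
  obtain ⟨hmI, hmpI, hm1I, hmp1I⟩ := interval_facts hn m p hp1 hp2
  have hInc := interval_ne_compl hn m p hp1 hp2
  funext C
  rw [relElt]
  rw [map_add, map_sub, Pi.add_apply, Pi.sub_apply, coeA_of,
    coeA_sum_star hn _ C, coeA_sum_star hn _ C]
  have hstar : (C = starIdx n hn ((Finset.range (p + 1)).image (fun i : ℕ => m + (i : ZMod n)))
        (by rw [interval_card n hn m p hp2]; omega)) ↔
      ((Finset.range (p + 1)).image (fun i : ℕ => m + (i : ZMod n)) = C.val ∨
       (Finset.range (p + 1)).image (fun i : ℕ => m + (i : ZMod n)) = C.valᶜ) := by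
    rw [eq_comm, starIdx_eq_iff hn]
  rw [if_congr hstar rfl rfl]
  have hm11 : m - 1 + 1 = m := by ring
  by_cases hCI : C.val = (Finset.range (p + 1)).image (fun i : ℕ => m + (i : ZMod n))
  · simp [ee, chi, hCI, hmI, hmpI, hm1I, hmp1I, hm11, hInc, Ne.symm hInc, hInc.symm,
      compl_compl]
  · by_cases hCIc : C.val = ((Finset.range (p + 1)).image (fun i : ℕ => m + (i : ZMod n)))ᶜ
    · simp [ee, chi, hCIc, hmI, hmpI, hm1I, hmp1I, hm11, hInc, Ne.symm hInc, hInc.symm,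
        compl_compl]
    · have hne1 : ¬((Finset.range (p + 1)).image (fun i : ℕ => m + (i : ZMod n)) = C.val) :=
        fun h => hCI h.symm
      have hne2 : ¬((Finset.range (p + 1)).image (fun i : ℕ => m + (i : ZMod n)) = C.valᶜ) := by
        intro h
        exact hCIc (by rw [h, compl_compl])
      have hne3 : C.val ≠ ((Finset.range (p + 1)).image (fun i : ℕ => m + (i : ZMod n)))ᶜ :=
        hCIc
      have hne4 : C.valᶜ ≠ ((Finset.range (p + 1)).image (fun i : ℕ => m + (i : ZMod n)))ᶜ :=
        fun h => hCI (compl_injective h)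
      by_cases hA : m - 1 ∈ C.val <;> by_cases hB : m ∈ C.val <;>
        by_cases hG : m + (p : ZMod n) ∈ C.val <;>
        by_cases hD : m + (p : ZMod n) + 1 ∈ C.val <;>
        norm_num [ee, chi, hA, hB, hG, hD, hne1, hne2, hne3, hne4, hm11]


noncomputable def g0 (n : ℕ) (hn : 4 ≤ n) :
    FreeAbelianGroup (DivIdx n) →+ FreeAbelianGroup (D0Idx n) :=
  FreeAbelianGroup.lift (fun A : DivIdx n => FreeAbelianGroup.of (starIdx n hn A.val A.prop))

lemma g0_of (hn : 4 ≤ n) (A : DivIdx n) :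
    g0 n hn (FreeAbelianGroup.of A) = FreeAbelianGroup.of (starIdx n hn A.val A.prop) := by
  rw [g0, FreeAbelianGroup.lift_apply_of]

lemma coeA_g0_keel (hn : 4 ≤ n) (i j k l : ZMod n) :
    coeA n (g0 n hn (keelElt n hn i j k l)) = (chi n i - chi n l) * (chi n j - chi n k) := by
  haveI : NeZero n := ⟨by omega⟩
  funext C
  rw [keelElt, map_sub, map_sum, map_sum]
  simp only [g0_of hn]
  rw [map_sub, Pi.sub_apply, coeA_sum_star hn _ C, coeA_sum_star hn _ C]
  by_cases hi : i ∈ C.val <;> by_cases hj : j ∈ C.val <;>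
    by_cases hk : k ∈ C.val <;> by_cases hl : l ∈ C.val <;>
    norm_num [chi, hi, hj, hk, hl]

lemma relElt_mem (hn : 4 ≤ n) (m : ZMod n) (p : ℕ) (hp1 : 1 ≤ p) (hp2 : p ≤ n - 3) :
    relElt n hn m p hp1 hp2 ∈ NewRelations n hn :=
  AddSubgroup.subset_closure ⟨m, p, hp1, hp2, rfl⟩

lemma block_mem (hn : 4 ≤ n) (x y : ZMod n) (h2 : 2 ≤ (y - x).val) (h3 : (y - x).val ≤ n - 2) :
    ee n x * ee n y ∈ (NewRelations n hn).map (coeA n) := by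
  haveI : NeZero n := ⟨by omega⟩
  have hvlt : (y - x).val < n := ZMod.val_lt _
  have hp1 : 1 ≤ (y - x).val - 1 := by omega
  have hp2 : (y - x).val - 1 ≤ n - 3 := by omega
  refine AddSubgroup.mem_map.mpr ⟨-(relElt n hn (x + 1) ((y - x).val - 1) hp1 hp2),
    neg_mem (relElt_mem hn _ _ _ _), ?_⟩
  have hcast : (((y - x).val - 1 : ℕ) : ZMod n) = y - x - 1 := by
    rw [Nat.cast_sub (by omega), Nat.cast_one, ZMod.natCast_val, ZMod.cast_id]
  rw [map_neg, coeA_relElt hn, neg_neg]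
  have e1 : x + 1 - 1 = x := by ring
  have e2 : x + 1 + (((y - x).val - 1 : ℕ) : ZMod n) = y := by rw [hcast]; ring
  rw [e1, e2]

lemma telescope (i : ZMod n) (c : ℕ) :
    chi n (i + (c : ZMod n)) - chi n i = ∑ a ∈ Finset.range c, ee n (i + (a : ZMod n)) := by
  induction c with
  | zero => simp
  | succ c ih =>
      rw [Finset.sum_range_succ, ← ih]
      have h1 : i + ((c + 1 : ℕ) : ZMod n) = (i + (c : ZMod n)) + 1 := by push_cast; ring
      rw [h1, ee]
      ring

lemma telescope' (i : ZMod n) (u v : ℕ) (huv : u ≤ v) :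
    chi n (i + (v : ZMod n)) - chi n (i + (u : ZMod n))
      = ∑ a ∈ Finset.Ico u v, ee n (i + (a : ZMod n)) := by
  rw [Finset.sum_Ico_eq_sub _ huv, ← telescope, ← telescope]
  ring

lemma pair_mem (hn : 4 ≤ n) (i : ZMod n) (s t u v : ℕ) (hst : s ≤ t) (huv : u ≤ v)
    (h1 : t + 1 ≤ u) (h2 : v ≤ s + (n - 1)) :
    (chi n (i + (t : ZMod n)) - chi n (i + (s : ZMod n))) *
      (chi n (i + (v : ZMod n)) - chi n (i + (u : ZMod n)))
      ∈ (NewRelations n hn).map (coeA n) := by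
  haveI : NeZero n := ⟨by omega⟩
  rw [telescope' i s t hst, telescope' i u v huv, Finset.sum_mul_sum]
  apply AddSubgroup.sum_mem
  intro a ha
  apply AddSubgroup.sum_mem
  intro b hb
  rw [Finset.mem_Ico] at ha hb
  have hab : a ≤ b := by omega
  have hval : ((i + (b : ZMod n)) - (i + (a : ZMod n))).val = b - a := by
    have hd : (i + (b : ZMod n)) - (i + (a : ZMod n)) = ((b - a : ℕ) : ZMod n) := by
      rw [Nat.cast_sub hab]; ring
    rw [hd, ZMod.val_cast_of_lt (by omega)]
  exact block_mem hn _ _ (by rw [hval]; omega) (by rw [hval]; omega)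

lemma offsets_mem (hn : 4 ≤ n) (i : ZMod n) (a b c : ℕ)
    (ha : 1 ≤ a) (hab : a < b) (hb : b ≤ n - 1) (hc1 : 1 ≤ c) (hc2 : c ≤ n - 1)
    (hca : c ≠ a) (hcb : c ≠ b) :
    (chi n i - chi n (i + (c : ZMod n))) * (chi n (i + (a : ZMod n)) - chi n (i + (b : ZMod n)))
      ∈ (NewRelations n hn).map (coeA n) := by
  haveI : NeZero n := ⟨by omega⟩
  have h0 : i + ((0 : ℕ) : ZMod n) = i := by push_cast; ring
  have hnn : i + ((n : ℕ) : ZMod n) = i := by rw [ZMod.natCast_self, add_zero]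
  rcases show c < a ∨ (a < c ∧ c < b) ∨ b < c by omega with h | ⟨h1', h2'⟩ | h
  · have H := pair_mem hn i 0 c a b (by omega) (by omega) (by omega) (by omega)
    rw [h0] at H
    have hEq : (chi n i - chi n (i + (c : ZMod n)))
          * (chi n (i + (a : ZMod n)) - chi n (i + (b : ZMod n)))
        = (chi n (i + (c : ZMod n)) - chi n i)
          * (chi n (i + (b : ZMod n)) - chi n (i + (a : ZMod n))) := by ring
    rw [hEq]; exact H
  · have H2 := pair_mem hn i 0 a c b (by omega) (by omega) (by omega) (by omega)
    rw [h0] at H2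
    have H3 := pair_mem hn i a c b n (by omega) (by omega) (by omega) (by omega)
    rw [hnn] at H3
    have hEq : (chi n i - chi n (i + (c : ZMod n)))
          * (chi n (i + (a : ZMod n)) - chi n (i + (b : ZMod n)))
        = (chi n (i + (a : ZMod n)) - chi n i)
            * (chi n (i + (b : ZMod n)) - chi n (i + (c : ZMod n)))
          - (chi n (i + (c : ZMod n)) - chi n (i + (a : ZMod n)))
            * (chi n i - chi n (i + (b : ZMod n))) := by ring
    rw [hEq]; exact sub_mem H2 H3
  · have H := pair_mem hn i a b c n (by omega) (by omega) (by omega) (by omega)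
    rw [hnn] at H
    have hEq : (chi n i - chi n (i + (c : ZMod n)))
          * (chi n (i + (a : ZMod n)) - chi n (i + (b : ZMod n)))
        = -((chi n (i + (b : ZMod n)) - chi n (i + (a : ZMod n)))
            * (chi n i - chi n (i + (c : ZMod n)))) := by ring
    rw [hEq]; exact neg_mem H

lemma g0_keel_mem (hn : 4 ≤ n) (i j k l : ZMod n) (hij : i ≠ j) (hik : i ≠ k) (hil : i ≠ l)
    (hjk : j ≠ k) (hjl : j ≠ l) (hkl : k ≠ l) :
    g0 n hn (keelElt n hn i j k l) ∈ NewRelations n hn := by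
  haveI : NeZero n := ⟨by omega⟩
  have hvalcast : ∀ z : ZMod n, ((z.val : ℕ) : ZMod n) = z := fun z => by
    rw [ZMod.natCast_val, ZMod.cast_id]
  have hpos : ∀ z w : ZMod n, z ≠ w → 1 ≤ (w - z).val := by
    intro z w hzw
    have : w - z ≠ 0 := sub_ne_zero_of_ne (Ne.symm hzw)
    have := ZMod.val_pos.mpr this
    omega
  have hlt : ∀ z : ZMod n, z.val ≤ n - 1 := fun z => by have := ZMod.val_lt z; omega
  have hinj : ∀ z w : ZMod n, z.val = w.val → z = w := by
    intro z w h
    have := congrArg (fun q : ℕ => (q : ZMod n)) h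
    simpa [hvalcast] using this
  set a := (j - i).val with hA
  set b := (k - i).val with hB
  set c := (l - i).val with hC
  have hj : j = i + (a : ZMod n) := by rw [hA, hvalcast]; ring
  have hk : k = i + (b : ZMod n) := by rw [hB, hvalcast]; ring
  have hl : l = i + (c : ZMod n) := by rw [hC, hvalcast]; ring
  have ha1 : 1 ≤ a := hpos i j hij
  have hb1 : 1 ≤ b := hpos i k hik
  have hc1 : 1 ≤ c := hpos i l hil
  have ha2 : a ≤ n - 1 := hlt _
  have hb2 : b ≤ n - 1 := hlt _
  have hc2 : c ≤ n - 1 := hlt _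
  have hab : a ≠ b := fun h => hjk (by
    have := hinj _ _ h
    have h2 : j - i + i = k - i + i := by rw [this]
    simpa using h2)
  have hca : c ≠ a := fun h => hjl (by
    have := hinj _ _ h
    have h2 : l - i + i = j - i + i := by rw [this]
    simpa using h2.symm)
  have hcb : c ≠ b := fun h => hkl (by
    have := hinj _ _ h
    have h2 : l - i + i = k - i + i := by rw [this]
    simpa using h2.symm)
  have hmem : (chi n i - chi n l) * (chi n j - chi n k)
      ∈ (NewRelations n hn).map (coeA n) := by
    rcases Nat.lt_or_ge a b with hab' | hba'
    · rw [hj, hk, hl]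
      exact offsets_mem hn i a b c ha1 hab' hb2 hc1 hc2 hca hcb
    · have hba : b < a := by omega
      have H := offsets_mem hn i b a c hb1 hba ha2 hc1 hc2 hcb hca
      rw [hj, hk, hl]
      have hEq : (chi n i - chi n (i + (c : ZMod n)))
            * (chi n (i + (a : ZMod n)) - chi n (i + (b : ZMod n)))
          = -((chi n i - chi n (i + (c : ZMod n)))
              * (chi n (i + (b : ZMod n)) - chi n (i + (a : ZMod n)))) := by ring
      rw [hEq]; exact neg_mem H
  obtain ⟨r, hr, hcoe⟩ := AddSubgroup.mem_map.mp hmem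
  have hEq2 : coeA n r = coeA n (g0 n hn (keelElt n hn i j k l)) := by
    rw [hcoe, coeA_g0_keel hn]
  have := coeA_injective hEq2
  rwa [← this]
/-! ### The homomorphisms between the two presentations -/

lemma mk_sum {G : Type*} [AddCommGroup G] (N : AddSubgroup G) {ι : Type*} (S : Finset ι)
    (f : ι → G) :
    (QuotientAddGroup.mk (∑ a ∈ S, f a) : G ⧸ N)
      = ∑ a ∈ S, (QuotientAddGroup.mk (f a) : G ⧸ N) :=
  map_sum (QuotientAddGroup.mk' N) f S

lemma pi_compl (hn : 4 ≤ n) (A : DivIdx n) :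
    (QuotientAddGroup.mk (FreeAbelianGroup.of A) : KeelGroup n hn)
      = QuotientAddGroup.mk (FreeAbelianGroup.of (complIdx n hn A)) := by
  rw [QuotientAddGroup.eq]
  have h1 : -(FreeAbelianGroup.of A) + FreeAbelianGroup.of (complIdx n hn A)
      = -(FreeAbelianGroup.of A - FreeAbelianGroup.of (complIdx n hn A)) := by abel
  rw [h1]
  exact neg_mem (AddSubgroup.subset_closure (Or.inl ⟨A, rfl⟩))

lemma pi_star (hn : 4 ≤ n) (X : Finset (ZMod n)) (h : 2 ≤ X.card ∧ X.card ≤ n - 2) :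
    (QuotientAddGroup.mk (FreeAbelianGroup.of
        (⟨(starIdx n hn X h).val, (starIdx n hn X h).prop.2⟩ : DivIdx n)) : KeelGroup n hn)
      = QuotientAddGroup.mk (FreeAbelianGroup.of (⟨X, h⟩ : DivIdx n)) := by
  rw [starIdx]
  split_ifs with h0
  · rfl
  · have hgen : ∀ (B : DivIdx n), B = complIdx n hn ⟨X, h⟩ →
        (QuotientAddGroup.mk (FreeAbelianGroup.of B) : KeelGroup n hn)
          = QuotientAddGroup.mk (FreeAbelianGroup.of (⟨X, h⟩ : DivIdx n)) := by
      rintro B rfl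
      exact (pi_compl hn ⟨X, h⟩).symm
    exact hgen _ (Subtype.ext rfl)

noncomputable def phi (n : ℕ) (hn : 4 ≤ n) : FreeAbelianGroup (D0Idx n) →+ KeelGroup n hn :=
  FreeAbelianGroup.lift (fun A : D0Idx n =>
    (QuotientAddGroup.mk (FreeAbelianGroup.of (⟨A.val, A.prop.2⟩ : DivIdx n)) : KeelGroup n hn))

lemma phi_of_star (hn : 4 ≤ n) (X : Finset (ZMod n)) (h : 2 ≤ X.card ∧ X.card ≤ n - 2) :
    phi n hn (FreeAbelianGroup.of (starIdx n hn X h))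
      = QuotientAddGroup.mk (FreeAbelianGroup.of (⟨X, h⟩ : DivIdx n)) := by
  rw [phi, FreeAbelianGroup.lift_apply_of]
  exact pi_star hn X h

lemma cast_nonzero (hn : 4 ≤ n) (q : ℕ) (h1 : 1 ≤ q) (h2 : q ≤ n - 1) :
    ((q : ℕ) : ZMod n) ≠ 0 := by
  intro h
  rw [ZMod.natCast_eq_zero_iff] at h
  have := Nat.le_of_dvd (by omega) h
  omega

lemma shift_ne (hn : 4 ≤ n) (q : ℕ) (h1 : 1 ≤ q) (h2 : q ≤ n - 1) (z : ZMod n) :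
    z ≠ z + (q : ZMod n) := by
  intro hE
  have h3 : ((q : ℕ) : ZMod n) = 0 := by
    have := hE.symm
    rwa [add_eq_left] at this
  exact cast_nonzero hn q h1 h2 h3

lemma phi_relElt (hn : 4 ≤ n) (m : ZMod n) (p : ℕ) (hp1 : 1 ≤ p) (hp2 : p ≤ n - 3) :
    phi n hn (relElt n hn m p hp1 hp2) = 0 := by
  haveI : NeZero n := ⟨by omega⟩
  obtain ⟨hmI, hmpI, hm1I, hmp1I⟩ := interval_facts hn m p hp1 hp2
  -- distinctness facts
  have d1 : m - 1 ≠ m := fun hE => shift_ne hn 1 (by omega) (by omega) (m - 1)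
    (hE.trans (by push_cast; ring))
  have d2 : m - 1 ≠ m + (p : ZMod n) := fun hE => shift_ne hn (p + 1) (by omega) (by omega)
    (m - 1) (hE.trans (by push_cast; ring))
  have d3 : m - 1 ≠ m + (p : ZMod n) + 1 := fun hE => shift_ne hn (p + 2) (by omega) (by omega)
    (m - 1) (hE.trans (by push_cast; ring))
  have d4 : m ≠ m + (p : ZMod n) := fun hE => shift_ne hn p (by omega) (by omega) m
    (hE.trans (by push_cast; ring))
  have d5 : m ≠ m + (p : ZMod n) + 1 := fun hE => shift_ne hn (p + 1) (by omega) (by omega) m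
    (hE.trans (by push_cast; ring))
  have d6 : m + (p : ZMod n) ≠ m + (p : ZMod n) + 1 := fun hE => shift_ne hn 1 (by omega)
    (by omega) (m + (p : ZMod n)) (hE.trans (by push_cast; ring))
  rw [relElt, map_add, map_sub, map_sum, map_sum]
  simp only [phi_of_star hn, Subtype.coe_eta]
  rw [← mk_sum, ← mk_sum, ← QuotientAddGroup.mk_sub, ← QuotientAddGroup.mk_add]
  refine (QuotientAddGroup.eq_zero_iff _).mpr ?_
  -- names for the two relevant divisor classes
  set I : Finset (ZMod n) := (Finset.range (p + 1)).image (fun i : ℕ => m + (i : ZMod n))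
    with hIdef
  have hIcard : 2 ≤ I.card ∧ I.card ≤ n - 2 := by
    rw [hIdef, interval_card n hn m p hp2]; omega
  show FreeAbelianGroup.of (⟨I, hIcard⟩ : DivIdx n)
      - (∑ A ∈ Finset.univ.filter (fun A : DivIdx n =>
          m - 1 ∈ A.val ∧ m + (p : ZMod n) ∈ A.val ∧ m ∉ A.val ∧
            m + (p : ZMod n) + 1 ∉ A.val), FreeAbelianGroup.of A)
      + (∑ A ∈ Finset.univ.filter (fun A : DivIdx n =>
          m - 1 ∈ A.val ∧ m + (p : ZMod n) + 1 ∈ A.val ∧ m ∉ A.val ∧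
            m + (p : ZMod n) ∉ A.val ∧ A.val ≠ Iᶜ), FreeAbelianGroup.of A)
      ∈ KeelRelations n hn
  set I' : DivIdx n := ⟨I, hIcard⟩ with hI'def
  set Ic : DivIdx n := complIdx n hn I' with hIcdef
  have hK1 : keelElt n hn (m - 1) (m + (p : ZMod n) + 1) m (m + (p : ZMod n))
      = (∑ A ∈ Finset.univ.filter (fun A : DivIdx n =>
          m - 1 ∈ A.val ∧ m + (p : ZMod n) + 1 ∈ A.val ∧ m ∉ A.val ∧
            m + (p : ZMod n) ∉ A.val), FreeAbelianGroup.of A)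
        - (∑ A ∈ Finset.univ.filter (fun A : DivIdx n =>
          m - 1 ∈ A.val ∧ m ∈ A.val ∧ m + (p : ZMod n) + 1 ∉ A.val ∧
            m + (p : ZMod n) ∉ A.val), FreeAbelianGroup.of A) := rfl
  have hK2 : keelElt n hn (m - 1) (m + (p : ZMod n)) m (m + (p : ZMod n) + 1)
      = (∑ A ∈ Finset.univ.filter (fun A : DivIdx n =>
          m - 1 ∈ A.val ∧ m + (p : ZMod n) ∈ A.val ∧ m ∉ A.val ∧
            m + (p : ZMod n) + 1 ∉ A.val), FreeAbelianGroup.of A)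
        - (∑ A ∈ Finset.univ.filter (fun A : DivIdx n =>
          m - 1 ∈ A.val ∧ m ∈ A.val ∧ m + (p : ZMod n) ∉ A.val ∧
            m + (p : ZMod n) + 1 ∉ A.val), FreeAbelianGroup.of A) := rfl
  have hM : Finset.univ.filter (fun A : DivIdx n =>
        m - 1 ∈ A.val ∧ m ∈ A.val ∧ m + (p : ZMod n) + 1 ∉ A.val ∧
          m + (p : ZMod n) ∉ A.val)
      = Finset.univ.filter (fun A : DivIdx n =>
        m - 1 ∈ A.val ∧ m ∈ A.val ∧ m + (p : ZMod n) ∉ A.val ∧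
          m + (p : ZMod n) + 1 ∉ A.val) := by
    apply Finset.filter_congr
    intro A _
    constructor <;> (rintro ⟨u1, u2, u3, u4⟩; exact ⟨u1, u2, u4, u3⟩)
  have hIcmem : Ic ∈ Finset.univ.filter (fun A : DivIdx n =>
      m - 1 ∈ A.val ∧ m + (p : ZMod n) + 1 ∈ A.val ∧ m ∉ A.val ∧
        m + (p : ZMod n) ∉ A.val) := by
    rw [Finset.mem_filter]
    refine ⟨Finset.mem_univ _, Finset.mem_compl.mpr hm1I, Finset.mem_compl.mpr hmp1I,
      fun hc => (Finset.mem_compl.mp hc) hmI, fun hc => (Finset.mem_compl.mp hc) hmpI⟩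
  have hFK : Finset.univ.filter (fun A : DivIdx n =>
        m - 1 ∈ A.val ∧ m + (p : ZMod n) + 1 ∈ A.val ∧ m ∉ A.val ∧
          m + (p : ZMod n) ∉ A.val ∧ A.val ≠ Iᶜ)
      = (Finset.univ.filter (fun A : DivIdx n =>
        m - 1 ∈ A.val ∧ m + (p : ZMod n) + 1 ∈ A.val ∧ m ∉ A.val ∧
          m + (p : ZMod n) ∉ A.val)).erase Ic := by
    ext A
    simp only [Finset.mem_filter, Finset.mem_erase, Finset.mem_univ, true_and]
    constructor
    · rintro ⟨u1, u2, u3, u4, u5⟩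
      exact ⟨fun hE => u5 (by rw [hE, hIcdef]; rfl), u1, u2, u3, u4⟩
    · rintro ⟨u0, u1, u2, u3, u4⟩
      exact ⟨u1, u2, u3, u4, fun hv => u0 (Subtype.ext hv)⟩
  have hsplit : (∑ A ∈ Finset.univ.filter (fun A : DivIdx n =>
        m - 1 ∈ A.val ∧ m + (p : ZMod n) + 1 ∈ A.val ∧ m ∉ A.val ∧
          m + (p : ZMod n) ∉ A.val ∧ A.val ≠ Iᶜ), FreeAbelianGroup.of A)
      = (∑ A ∈ Finset.univ.filter (fun A : DivIdx n =>
        m - 1 ∈ A.val ∧ m + (p : ZMod n) + 1 ∈ A.val ∧ m ∉ A.val ∧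
          m + (p : ZMod n) ∉ A.val), FreeAbelianGroup.of A)
        - FreeAbelianGroup.of Ic := by
    rw [hFK, Finset.sum_erase_eq_sub hIcmem]
  rw [hsplit]
  have hw : FreeAbelianGroup.of I'
      - (∑ A ∈ Finset.univ.filter (fun A : DivIdx n =>
          m - 1 ∈ A.val ∧ m + (p : ZMod n) ∈ A.val ∧ m ∉ A.val ∧
            m + (p : ZMod n) + 1 ∉ A.val), FreeAbelianGroup.of A)
      + ((∑ A ∈ Finset.univ.filter (fun A : DivIdx n =>
          m - 1 ∈ A.val ∧ m + (p : ZMod n) + 1 ∈ A.val ∧ m ∉ A.val ∧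
            m + (p : ZMod n) ∉ A.val), FreeAbelianGroup.of A)
          - FreeAbelianGroup.of Ic)
      = (FreeAbelianGroup.of I' - FreeAbelianGroup.of Ic)
        + (keelElt n hn (m - 1) (m + (p : ZMod n) + 1) m (m + (p : ZMod n))
          - keelElt n hn (m - 1) (m + (p : ZMod n)) m (m + (p : ZMod n) + 1)) := by
    rw [hK1, hK2, hM]
    abel
  rw [hw]
  refine add_mem (AddSubgroup.subset_closure (Or.inl ⟨I', rfl⟩)) (sub_mem ?_ ?_)
  · exact AddSubgroup.subset_closure (Or.inr
      ⟨m - 1, m + (p : ZMod n) + 1, m, m + (p : ZMod n),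
        d3, d1, d2, Ne.symm d5, Ne.symm d6, d4, rfl⟩)
  · exact AddSubgroup.subset_closure (Or.inr
      ⟨m - 1, m + (p : ZMod n), m, m + (p : ZMod n) + 1,
        d2, d1, d3, Ne.symm d4, d6, d5, rfl⟩)
lemma phi_ker (hn : 4 ≤ n) : NewRelations n hn ≤ (phi n hn).ker := by
  rw [NewRelations, AddSubgroup.closure_le]
  rintro x ⟨m, p, hp1, hp2, rfl⟩
  exact phi_relElt hn m p hp1 hp2

lemma star_compl [NeZero n] (hn : 4 ≤ n) (X : Finset (ZMod n)) (h : 2 ≤ X.card ∧ X.card ≤ n - 2)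
    (h' : 2 ≤ Xᶜ.card ∧ Xᶜ.card ≤ n - 2) :
    starIdx n hn Xᶜ h' = starIdx n hn X h := by
  rw [starIdx, starIdx]
  by_cases h0 : (0 : ZMod n) ∈ X
  · rw [dif_pos h0, dif_neg (by simp [h0])]
    exact Subtype.ext (by simp)
  · rw [dif_neg h0, dif_pos (Finset.mem_compl.mpr h0)]

lemma star_of_mem (hn : 4 ≤ n) (X : Finset (ZMod n)) (h : 2 ≤ X.card ∧ X.card ≤ n - 2)
    (h0 : (0 : ZMod n) ∈ X) :
    starIdx n hn X h = ⟨X, h0, h⟩ := by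
  rw [starIdx, dif_pos h0]

noncomputable def psi (n : ℕ) (hn : 4 ≤ n) :
    FreeAbelianGroup (DivIdx n) →+ (FreeAbelianGroup (D0Idx n) ⧸ NewRelations n hn) :=
  (QuotientAddGroup.mk' (NewRelations n hn)).comp (g0 n hn)

lemma psi_of (hn : 4 ≤ n) (A : DivIdx n) :
    psi n hn (FreeAbelianGroup.of A)
      = QuotientAddGroup.mk (FreeAbelianGroup.of (starIdx n hn A.val A.prop)) := by
  rw [psi, AddMonoidHom.comp_apply, g0_of hn]
  rfl

lemma psi_ker (hn : 4 ≤ n) : KeelRelations n hn ≤ (psi n hn).ker := by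
  haveI : NeZero n := ⟨by omega⟩
  rw [KeelRelations, AddSubgroup.closure_le]
  rintro x (⟨A, rfl⟩ | ⟨i, j, k, l, hij, hik, hil, hjk, hjl, hkl, rfl⟩)
  · have : psi n hn (FreeAbelianGroup.of A - FreeAbelianGroup.of (complIdx n hn A)) = 0 := by
      rw [map_sub, psi_of hn, psi_of hn]
      have hstar : starIdx n hn (complIdx n hn A).val (complIdx n hn A).prop
          = starIdx n hn A.val A.prop := star_compl hn A.val A.prop _
      rw [hstar, sub_self]
    exact this
  · have : psi n hn (keelElt n hn i j k l) = 0 := by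
      rw [psi, AddMonoidHom.comp_apply]
      exact (QuotientAddGroup.eq_zero_iff _).mpr
        (g0_keel_mem hn i j k l hij hik hil hjk hjl hkl)
    exact this

end NewPresAux
/-- the natural group homomorphism `F'/R' → G(n)`, sending the class of
`δ_A` to the class of `δ_A` in the Keel presentation group `G(n)`, is an isomorphism. -/
theorem new_presentation_iso (n : ℕ) (hn : 4 ≤ n) :
    ∃ f : (FreeAbelianGroup (D0Idx n) ⧸ NewRelations n hn) ≃+ KeelGroup n hn,
      ∀ A : D0Idx n,
        f (QuotientAddGroup.mk (FreeAbelianGroup.of A)) =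
          QuotientAddGroup.mk (FreeAbelianGroup.of (⟨A.val, A.prop.2⟩ : DivIdx n)) := by
  haveI : NeZero n := ⟨by omega⟩
  classical
  set fh : (FreeAbelianGroup (D0Idx n) ⧸ NewRelations n hn) →+ KeelGroup n hn :=
    QuotientAddGroup.lift (NewRelations n hn) (NewPresAux.phi n hn) (NewPresAux.phi_ker hn)
    with hfh
  set gh : KeelGroup n hn →+ (FreeAbelianGroup (D0Idx n) ⧸ NewRelations n hn) :=
    QuotientAddGroup.lift (KeelRelations n hn) (NewPresAux.psi n hn) (NewPresAux.psi_ker hn)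
    with hgh
  have hfmk : ∀ A : D0Idx n,
      fh (QuotientAddGroup.mk (FreeAbelianGroup.of A)) =
        QuotientAddGroup.mk (FreeAbelianGroup.of (⟨A.val, A.prop.2⟩ : DivIdx n)) := by
    intro A
    rw [hfh, QuotientAddGroup.lift_mk, NewPresAux.phi, FreeAbelianGroup.lift_apply_of]
  have hgmk : ∀ X : DivIdx n,
      gh (QuotientAddGroup.mk (FreeAbelianGroup.of X)) =
        QuotientAddGroup.mk (FreeAbelianGroup.of (starIdx n hn X.val X.prop)) := by
    intro X
    rw [hgh, QuotientAddGroup.lift_mk, NewPresAux.psi_of hn]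
  have hleft : ∀ q, gh (fh q) = q := by
    intro q
    refine QuotientAddGroup.induction_on q (fun z => ?_)
    refine FreeAbelianGroup.induction_on z ?_ ?_ ?_ ?_
    · simp
    · intro A
      rw [hfmk A, hgmk ⟨A.val, A.prop.2⟩]
      have hst : starIdx n hn (⟨A.val, A.prop.2⟩ : DivIdx n).val
            (⟨A.val, A.prop.2⟩ : DivIdx n).prop
          = ⟨A.val, A.prop.1, A.prop.2⟩ := NewPresAux.star_of_mem hn _ _ A.prop.1
      rw [hst]
    · intro A hA
      have h1 : (QuotientAddGroup.mk (-FreeAbelianGroup.of A) :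
          FreeAbelianGroup (D0Idx n) ⧸ NewRelations n hn)
          = -(QuotientAddGroup.mk (FreeAbelianGroup.of A)) := rfl
      rw [h1, map_neg, map_neg, hA]
    · intro x y hx hy
      have h1 : (QuotientAddGroup.mk (x + y) :
          FreeAbelianGroup (D0Idx n) ⧸ NewRelations n hn)
          = QuotientAddGroup.mk x + QuotientAddGroup.mk y := rfl
      rw [h1, map_add, map_add, hx, hy]
  have hright : ∀ q, fh (gh q) = q := by
    intro q
    refine QuotientAddGroup.induction_on q (fun z => ?_)
    refine FreeAbelianGroup.induction_on z ?_ ?_ ?_ ?_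
    · simp
    · intro X
      rw [hgmk X, hfmk (starIdx n hn X.val X.prop)]
      have h2 := NewPresAux.pi_star hn X.val X.prop
      rw [h2]
    · intro X hX
      have h1 : (QuotientAddGroup.mk (-FreeAbelianGroup.of X) : KeelGroup n hn)
          = -(QuotientAddGroup.mk (FreeAbelianGroup.of X)) := rfl
      rw [h1, map_neg, map_neg, hX]
    · intro x y hx hy
      have h1 : (QuotientAddGroup.mk (x + y) : KeelGroup n hn)
          = QuotientAddGroup.mk x + QuotientAddGroup.mk y := rfl
      rw [h1, map_add, map_add, hx, hy]
  refine ⟨{ toFun := fh, invFun := gh, left_inv := hleft, right_inv := hright,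
            map_add' := map_add fh }, hfmk⟩
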